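/- Let γ: [0,∞) → (0,∞) be C^2 with γ(0) = γ'(0) = 1, γ increasing and γ'' < 0. Let t > 0, let h: [0,t] → ℝ be continuous with |h(s)| ≤ -γ''(s)/γ(s), and let F: [0,t] → ℝ be continuous. If y solves y''(s) = h(s)y(s) + F(s) on [0,t] with y(0) = y'(0) and y(t) = 0, then sup_{s∈[0,t]} |y(s)|/γ(s) ≤ ∫_0^t |F(s)| (t-s)/γ(t) ds, and sup_{s∈[0,t)} |y(s)|/(t-s) ≤ ∫_0^t |F(s)| γ(s)/γ(t) ds. -/

import Mathlib

open Set MeasureTheory intervalIntegral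

lemma ftc_right {f : ℝ → ℝ} (hf : Continuous f) (a x : ℝ) :
    HasDerivAt (fun u => ∫ τ in a..u, f τ) (f x) x :=
  intervalIntegral.integral_hasDerivAt_right (hf.intervalIntegrable a x)
    (hf.stronglyMeasurable.stronglyMeasurableAtFilter) hf.continuousAt

lemma ftc_left {f : ℝ → ℝ} (hf : Continuous f) (b x : ℝ) :
    HasDerivAt (fun u => ∫ τ in u..b, f τ) (-(f x)) x :=
  intervalIntegral.integral_hasDerivAt_left (hf.intervalIntegrable x b)
    (hf.stronglyMeasurable.stronglyMeasurableAtFilter) hf.continuousAt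

noncomputable def odeCl (t σ : ℝ) : ℝ := max 0 (min σ t)

lemma odeCl_mem {t : ℝ} (ht : 0 ≤ t) (σ : ℝ) : odeCl t σ ∈ Icc 0 t :=
  ⟨le_max_left _ _, max_le ht (min_le_right _ _)⟩

lemma odeCl_eq {t σ : ℝ} (hσ : σ ∈ Icc 0 t) : odeCl t σ = σ := by
  simp [odeCl, min_eq_left hσ.2, max_eq_right hσ.1]

lemma odeCl_cont (t : ℝ) : Continuous (odeCl t) :=
  continuous_const.max (continuous_id.min continuous_const)

noncomputable def odeG (γ F : ℝ → ℝ) (t s : ℝ) : ℝ :=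
  ∫ τ in (0:ℝ)..s, γ (odeCl t τ) * |F (odeCl t τ)|

noncomputable def odeQ (γ : ℝ → ℝ) (t s : ℝ) : ℝ :=
  ∫ r in s..t, ((γ (odeCl t r)) ^ 2)⁻¹

noncomputable def odeV (γ F : ℝ → ℝ) (t s : ℝ) : ℝ :=
  ∫ σ in s..t, odeG γ F t σ * ((γ (odeCl t σ)) ^ 2)⁻¹

section basics

variable {γ F : ℝ → ℝ} {t : ℝ}

lemma cont_g (hγ : Continuous γ) (hF : ContinuousOn F (Icc 0 t)) (ht : 0 ≤ t) :
    Continuous fun σ => γ (odeCl t σ) * |F (odeCl t σ)| :=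
  (hγ.comp (odeCl_cont t)).mul ((hF.comp_continuous (odeCl_cont t) (odeCl_mem ht)).abs)

lemma cont_q (hγ : Continuous γ) (hpos : ∀ s : ℝ, 0 ≤ s → 0 < γ s) (ht : 0 ≤ t) :
    Continuous fun σ => ((γ (odeCl t σ)) ^ 2)⁻¹ :=
  ((hγ.comp (odeCl_cont t)).pow 2).inv₀
    (fun σ => pow_ne_zero 2 (hpos _ (odeCl_mem ht σ).1).ne')

lemma hasDerivAt_G (hγ : Continuous γ) (hF : ContinuousOn F (Icc 0 t)) (ht : 0 ≤ t) (x : ℝ) :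
    HasDerivAt (odeG γ F t) (γ (odeCl t x) * |F (odeCl t x)|) x :=
  ftc_right (cont_g hγ hF ht) 0 x

lemma cont_G (hγ : Continuous γ) (hF : ContinuousOn F (Icc 0 t)) (ht : 0 ≤ t) :
    Continuous (odeG γ F t) :=
  continuous_iff_continuousAt.2 fun x => (hasDerivAt_G hγ hF ht x).continuousAt

lemma hasDerivAt_Q (hγ : Continuous γ) (hpos : ∀ s : ℝ, 0 ≤ s → 0 < γ s) (ht : 0 ≤ t) (x : ℝ) :
    HasDerivAt (odeQ γ t) (-(((γ (odeCl t x)) ^ 2)⁻¹)) x :=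
  ftc_left (cont_q hγ hpos ht) t x

lemma hasDerivAt_V (hγ : Continuous γ) (hpos : ∀ s : ℝ, 0 ≤ s → 0 < γ s)
    (hF : ContinuousOn F (Icc 0 t)) (ht : 0 ≤ t) (x : ℝ) :
    HasDerivAt (odeV γ F t) (-(odeG γ F t x * ((γ (odeCl t x)) ^ 2)⁻¹)) x :=
  ftc_left ((cont_G hγ hF ht).mul (cont_q hγ hpos ht)) t x

lemma G_nonneg (hpos : ∀ s : ℝ, 0 ≤ s → 0 < γ s) (ht : 0 ≤ t) {s : ℝ} (hs : 0 ≤ s) :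
    0 ≤ odeG γ F t s :=
  intervalIntegral.integral_nonneg hs fun τ _ =>
    mul_nonneg (hpos _ (odeCl_mem ht τ).1).le (abs_nonneg _)

lemma G_mono (hγ : Continuous γ) (hF : ContinuousOn F (Icc 0 t)) (ht : 0 ≤ t)
    {a b : ℝ} (hab : a ≤ b) (hpos : ∀ s : ℝ, 0 ≤ s → 0 < γ s) :
    odeG γ F t a ≤ odeG γ F t b := by
  have h1 : IntervalIntegrable (fun σ => γ (odeCl t σ) * |F (odeCl t σ)|) volume 0 a :=
    (cont_g hγ hF ht).intervalIntegrable 0 a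
  have h2 : IntervalIntegrable (fun σ => γ (odeCl t σ) * |F (odeCl t σ)|) volume a b :=
    (cont_g hγ hF ht).intervalIntegrable a b
  have := intervalIntegral.integral_add_adjacent_intervals h1 h2
  have hnn : 0 ≤ ∫ τ in a..b, γ (odeCl t τ) * |F (odeCl t τ)| :=
    intervalIntegral.integral_nonneg hab fun τ _ =>
      mul_nonneg (hpos _ (odeCl_mem ht τ).1).le (abs_nonneg _)
  show odeG γ F t a ≤ odeG γ F t b
  unfold odeG
  rw [← this]; linarith

lemma V_nonneg (hpos : ∀ s : ℝ, 0 ≤ s → 0 < γ s) (ht : 0 ≤ t) {s : ℝ} (hs : s ∈ Icc 0 t) :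
    0 ≤ odeV γ F t s :=
  intervalIntegral.integral_nonneg hs.2 fun σ hσ =>
    mul_nonneg (G_nonneg hpos ht (hs.1.trans hσ.1)) (by positivity)

end basics

section conc
variable {γ : ℝ → ℝ} {t : ℝ}

lemma deriv_anti (hγC2 : ContDiff ℝ 2 γ)
    (hγ'' : ∀ s : ℝ, 0 ≤ s → deriv (deriv γ) s < 0) :
    StrictAntiOn (deriv γ) (Ici 0) := by
  have h2 : ContDiff ℝ (1 + 1 : ℕ) γ := by exact_mod_cast hγC2
  have hd1 : ContDiff ℝ (1 : ℕ) (deriv γ) := (contDiff_succ_iff_deriv.mp h2).2.2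
  exact strictAntiOn_of_deriv_neg (convex_Ici 0) hd1.continuous.continuousOn
    (fun x hx => hγ'' x (le_of_lt (by simpa using hx)))

lemma tangent_le (hγC2 : ContDiff ℝ 2 γ)
    (hγ'' : ∀ s : ℝ, 0 ≤ s → deriv (deriv γ) s < 0)
    {a x : ℝ} (ha : 0 ≤ a) (hax : a ≤ x) :
    deriv γ x * (x - a) ≤ γ x - γ a := by
  rcases eq_or_lt_of_le hax with rfl | hlt
  · simp
  · have hdiff : Differentiable ℝ γ := hγC2.differentiable (by norm_num)
    obtain ⟨c, hc, hcs⟩ := exists_deriv_eq_slope γ hlt hdiff.continuous.continuousOn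
      hdiff.differentiableOn
    have hanti := deriv_anti hγC2 hγ''
    have h1 : deriv γ x ≤ deriv γ c :=
      (hanti (le_of_lt (lt_of_le_of_lt ha hc.1) : c ∈ Ici 0)
        (ha.trans hax : x ∈ Ici 0) hc.2).le
    have h2 : deriv γ c * (x - a) = γ x - γ a := by
      rw [hcs, div_mul_cancel₀ _ (sub_ne_zero.mpr hlt.ne')]
    nlinarith [sub_pos.mpr hlt]
end conc


lemma key_ineq {γ : ℝ → ℝ} {t : ℝ} (hγC2 : ContDiff ℝ 2 γ)
    (hpos : ∀ s : ℝ, 0 ≤ s → 0 < γ s)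
    (hγ'' : ∀ s : ℝ, 0 ≤ s → deriv (deriv γ) s < 0)
    (ht : 0 ≤ t) {a : ℝ} (ha : a ∈ Icc 0 t) :
    γ a * odeQ γ t a ≤ (t - a) / γ t := by
  have hγd : Differentiable ℝ γ := hγC2.differentiable (by norm_num)
  have hγcont : Continuous γ := hγd.continuous
  have hA : 0 < γ a := hpos a ha.1
  have hT : 0 < γ t := hpos t ht
  set f : ℝ → ℝ := fun x => (x - a) * (γ a * γ x)⁻¹ - ∫ r in a..x, ((γ (odeCl t r)) ^ 2)⁻¹
    with hf
  have hd4 : ∀ x ∈ Ioo a t, HasDerivAt f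
      (1 * (γ a * γ x)⁻¹ + (x - a) * (-(γ a * deriv γ x) / (γ a * γ x) ^ 2)
        - ((γ (odeCl t x)) ^ 2)⁻¹) x := by
    intro x hx
    have hax : 0 ≤ x := ha.1.trans hx.1.le
    have hX : 0 < γ x := hpos x hax
    have hd1 : HasDerivAt (fun x => γ a * γ x) (γ a * deriv γ x) x :=
      ((hγd x).hasDerivAt).const_mul _
    have hd2 : HasDerivAt (fun x => (γ a * γ x)⁻¹)
        (-(γ a * deriv γ x) / (γ a * γ x) ^ 2) x := hd1.inv (mul_pos hA hX).ne'
    have hd3 : HasDerivAt (fun x : ℝ => x - a) 1 x := (hasDerivAt_id x).sub_const a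
    exact (hd3.mul hd2).sub (ftc_right (cont_q hγcont hpos ht) a x)
  have hmono : MonotoneOn f (Icc a t) := by
    apply monotoneOn_of_deriv_nonneg (convex_Icc a t)
    · apply ContinuousOn.sub
      · exact (continuousOn_id.sub continuousOn_const).mul
          (((continuous_const.mul hγcont).continuousOn).inv₀
            (fun x hx => (mul_pos hA (hpos x (ha.1.trans hx.1))).ne'))
      · exact (continuous_iff_continuousAt.2 fun x =>
          (ftc_right (cont_q hγcont hpos ht) a x).continuousAt).continuousOn
    · intro x hx
      rw [interior_Icc] at hx
      exact (hd4 x hx).differentiableAt.differentiableWithinAt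
    · intro x hx
      rw [interior_Icc] at hx
      have hax : 0 ≤ x := ha.1.trans hx.1.le
      have hX : 0 < γ x := hpos x hax
      rw [(hd4 x hx).deriv, odeCl_eq ⟨hax, hx.2.le⟩]
      have htan := tangent_le hγC2 hγ'' ha.1 hx.1.le
      have heq : 1 * (γ a * γ x)⁻¹ + (x - a) * (-(γ a * deriv γ x) / (γ a * γ x) ^ 2)
          - ((γ x) ^ 2)⁻¹ = (γ a * (γ x - (x - a) * deriv γ x - γ a)) / (γ a ^ 2 * γ x ^ 2) := by
        field_simp
        ring
      rw [heq]
      apply div_nonneg _ (by positivity)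
      have : 0 ≤ γ x - (x - a) * deriv γ x - γ a := by nlinarith
      nlinarith
  have hfa : f a = 0 := by simp [hf]
  have hft : 0 ≤ f t := by
    have := hmono (⟨le_refl a, ha.2⟩ : a ∈ Icc a t) (⟨ha.2, le_refl t⟩ : t ∈ Icc a t) ha.2
    rw [hfa] at this; exact this
  have hQ : odeQ γ t a ≤ (t - a) * (γ a * γ t)⁻¹ := by
    have : (0:ℝ) ≤ (t - a) * (γ a * γ t)⁻¹ - odeQ γ t a := hft
    linarith
  calc γ a * odeQ γ t a ≤ γ a * ((t - a) * (γ a * γ t)⁻¹) :=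
        mul_le_mul_of_nonneg_left hQ hA.le
    _ = (t - a) / γ t := by field_simp


lemma one_sided
    (γ : ℝ → ℝ) (hγC2 : ContDiff ℝ 2 γ)
    (hγpos : ∀ s : ℝ, 0 ≤ s → 0 < γ s)
    (hγ0 : γ 0 = 1) (hγ'0 : deriv γ 0 = 1)
    (t : ℝ) (ht : 0 < t)
    (h F y y' : ℝ → ℝ)
    (hFcont : ContinuousOn F (Set.Icc 0 t))
    (hbound : ∀ s ∈ Set.Icc 0 t, |h s| ≤ -(deriv (deriv γ) s) / γ s)
    (hy : ∀ s ∈ Set.Icc 0 t, HasDerivAt y (y' s) s)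
    (hy' : ∀ s ∈ Set.Icc 0 t, HasDerivAt y' (h s * y s + F s) s)
    (hinit : y 0 = y' 0) (hend : y t = 0) :
    ∀ s ∈ Set.Icc 0 t, y s ≤ γ s * odeV γ F t s := by
  have hT : (0:ℝ) ≤ t := ht.le
  have hγd : Differentiable ℝ γ := hγC2.differentiable (by norm_num)
  have hγcont : Continuous γ := hγd.continuous
  have h2 : ContDiff ℝ (1 + 1 : ℕ) γ := by exact_mod_cast hγC2
  have hd1 : ContDiff ℝ (1 : ℕ) (deriv γ) := (contDiff_succ_iff_deriv.mp h2).2.2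
  have hγd' : Differentiable ℝ (deriv γ) := hd1.differentiable (by norm_num)
  set V : ℝ → ℝ := odeV γ F t with hV
  set w : ℝ → ℝ := fun s => V s - y s / γ s with hw
  set W : ℝ → ℝ := fun s => -(odeG γ F t s) - (y' s * γ s - y s * deriv γ s) with hWdef
  -- derivative of w on Icc
  have hw' : ∀ s ∈ Icc 0 t, HasDerivAt w
      (-(odeG γ F t s * ((γ (odeCl t s)) ^ 2)⁻¹)
        - (y' s * γ s - y s * deriv γ s) / γ s ^ 2) s := by
    intro s hs
    exact (hasDerivAt_V hγcont hγpos hFcont hT s).sub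
      ((hy s hs).div (hγd s).hasDerivAt (hγpos s hs.1).ne')
  have hW' : ∀ s ∈ Icc 0 t, HasDerivAt W
      (-(γ (odeCl t s) * |F (odeCl t s)|)
        - ((h s * y s + F s) * γ s - y s * deriv (deriv γ) s)) s := by
    intro s hs
    have h1 := (hasDerivAt_G hγcont hFcont hT s).neg
    have h2' := ((hy' s hs).mul (hγd s).hasDerivAt).sub
      ((hy s hs).mul (hγd' s).hasDerivAt)
    have := h1.add h2'.neg
    exact this.congr_deriv (by ring)
  -- relation between the two derivatives
  have hDW : ∀ s ∈ Icc 0 t,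
      (-(odeG γ F t s * ((γ (odeCl t s)) ^ 2)⁻¹)
        - (y' s * γ s - y s * deriv γ s) / γ s ^ 2) = W s / γ s ^ 2 := by
    intro s hs
    rw [odeCl_eq hs, hWdef]
    have := (hγpos s hs.1).ne'
    field_simp
  -- continuity
  have hycont : ContinuousOn y (Icc 0 t) := fun s hs => (hy s hs).continuousAt.continuousWithinAt
  have hy'cont : ContinuousOn y' (Icc 0 t) := fun s hs => (hy' s hs).continuousAt.continuousWithinAt
  have hVcont : Continuous V := continuous_iff_continuousAt.2
    fun x => (hasDerivAt_V hγcont hγpos hFcont hT x).continuousAt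
  have hwc : ContinuousOn w (Icc 0 t) :=
    hVcont.continuousOn.sub (hycont.div hγcont.continuousOn fun s hs => (hγpos s hs.1).ne')
  have hWc : ContinuousOn W (Icc 0 t) := by
    apply ContinuousOn.sub
    · exact ((continuous_iff_continuousAt.2
        fun x => (hasDerivAt_G hγcont hFcont hT x).continuousAt).continuousOn).neg
    · exact (hy'cont.mul hγcont.continuousOn).sub
        (hycont.mul hγd'.continuous.continuousOn)
  have hVt : V t = 0 := by simp [hV, odeV]
  have hwt : w t = 0 := by simp [hw, hVt, hend]
  -- main claim : 0 ≤ w on Icc 0 t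
  have hmain : ∀ s ∈ Icc 0 t, 0 ≤ w s := by
    by_contra hcon
    push_neg at hcon
    obtain ⟨s₁, hs₁, hws₁⟩ := hcon
    obtain ⟨s₀, hs₀, hmin⟩ := isCompact_Icc.exists_isMinOn ⟨0, left_mem_Icc.mpr hT⟩ hwc
    have hw0 : w s₀ < 0 := lt_of_le_of_lt (hmin hs₁) hws₁
    have hs₀t : s₀ ≠ t := by rintro rfl; rw [hwt] at hw0; exact absurd hw0 (lt_irrefl 0).elim
    have hs₀lt : s₀ < t := lt_of_le_of_ne hs₀.2 hs₀t
    -- W s₀ ≤ 0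
    have hG0 : odeG γ F t 0 = 0 := intervalIntegral.integral_same
    have hWs₀ : W s₀ ≤ 0 := by
      rcases eq_or_lt_of_le hs₀.1 with he | hpos0
      · rw [← he]
        simp [hWdef, hG0, hγ0, hγ'0, hinit]
      · have hloc : IsLocalMin w s₀ := hmin.isLocalMin (Icc_mem_nhds hpos0 hs₀lt)
        have hzero := hloc.hasDerivAt_eq_zero (hw' s₀ hs₀)
        rw [hDW s₀ hs₀] at hzero
        have : W s₀ = 0 := by
          field_simp at hzero
          exact (div_eq_zero_iff.mp hzero).resolve_right (pow_ne_zero 2 (hγpos s₀ hs₀.1).ne')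
        exact this.le
    -- the first zero of w after s₀
    set S : Set ℝ := Icc s₀ t ∩ w ⁻¹' (Ici 0) with hS
    have hSc : IsClosed S := (hwc.mono (Icc_subset_Icc hs₀.1 le_rfl)).preimage_isClosed_of_isClosed
      isClosed_Icc isClosed_Ici
    have htS : t ∈ S := ⟨⟨hs₀.2, le_rfl⟩, by simp [hwt]⟩
    have hSbdd : BddBelow S := ⟨s₀, fun x hx => hx.1.1⟩
    set b : ℝ := sInf S with hb
    have hbS : b ∈ S := hSc.csInf_mem ⟨t, htS⟩ hSbdd
    have hs₀b : s₀ < b := by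
      rcases eq_or_lt_of_le hbS.1.1 with he | hlt
      · exfalso; rw [← he] at hbS; exact absurd hbS.2 (not_le.mpr hw0)
      · exact hlt
    have hwneg : ∀ x ∈ Ioo s₀ b, w x < 0 := by
      intro x hx
      by_contra hge
      push_neg at hge
      have hxS : x ∈ S := ⟨⟨hx.1.le, hx.2.le.trans hbS.1.2⟩, hge⟩
      exact absurd (csInf_le hSbdd hxS) (not_le.mpr hx.2)
    have hsub : Icc s₀ b ⊆ Icc 0 t := Icc_subset_Icc hs₀.1 hbS.1.2
    have hsubo : Ioo s₀ b ⊆ Icc 0 t := Ioo_subset_Icc_self.trans hsub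
    -- W antitone on Icc s₀ b
    have hWanti : AntitoneOn W (Icc s₀ b) := by
      apply antitoneOn_of_deriv_nonpos (convex_Icc s₀ b) (hWc.mono hsub)
      · intro x hx
        rw [interior_Icc] at hx
        exact (hW' x (hsubo hx)).differentiableAt.differentiableWithinAt
      · intro x hx
        rw [interior_Icc] at hx
        have hxI : x ∈ Icc 0 t := hsubo hx
        rw [(hW' x hxI).deriv, odeCl_eq hxI]
        have hX : 0 < γ x := hγpos x hxI.1
        have hb1 : |h x| * γ x ≤ -(deriv (deriv γ) x) := (le_div_iff₀ hX).mp (hbound x hxI)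
        have hc' : 0 ≤ γ x * h x - deriv (deriv γ) x := by
          have := neg_abs_le (h x)
          nlinarith
        have hyx : 0 < y x := by
          have hwx := hwneg x hx
          have hVx : 0 ≤ V x := V_nonneg hγpos hT hxI
          have : 0 < y x / γ x := by simp only [hw] at hwx; linarith
          exact (div_pos_iff.mp this).resolve_right (fun ⟨_, hg⟩ => absurd hX (not_lt.mpr hg.le)) |>.1
        nlinarith [mul_nonneg hyx.le hc', mul_le_mul_of_nonneg_left (neg_abs_le (F x)) hX.le]
    -- w antitone on Icc s₀ b
    have hwanti : AntitoneOn w (Icc s₀ b) := by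
      apply antitoneOn_of_deriv_nonpos (convex_Icc s₀ b) (hwc.mono hsub)
      · intro x hx
        rw [interior_Icc] at hx
        exact (hw' x (hsubo hx)).differentiableAt.differentiableWithinAt
      · intro x hx
        rw [interior_Icc] at hx
        have hxI : x ∈ Icc 0 t := hsubo hx
        rw [(hw' x hxI).deriv, hDW x hxI]
        have hWx : W x ≤ 0 := le_trans
          (hWanti (left_mem_Icc.mpr hs₀b.le) ⟨hx.1.le, hx.2.le⟩ hx.1.le) hWs₀
        exact div_nonpos_iff.mpr (Or.inr ⟨hWx, sq_nonneg _⟩)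
    have : w b ≤ w s₀ :=
      hwanti (left_mem_Icc.mpr hs₀b.le) (right_mem_Icc.mpr hs₀b.le) hs₀b.le
    have hwb : (0:ℝ) ≤ w b := hbS.2
    linarith
  -- conclude
  intro s hs
  have := hmain s hs
  have hX : 0 < γ s := hγpos s hs.1
  have : y s / γ s ≤ V s := by simp only [hw] at this; linarith
  calc y s = γ s * (y s / γ s) := by field_simp
    _ ≤ γ s * V s := mul_le_mul_of_nonneg_left this hX.le


theorem inhomogeneous_ode_estimate
    (γ : ℝ → ℝ) (hγC2 : ContDiff ℝ 2 γ)
    (hγpos : ∀ s : ℝ, 0 ≤ s → 0 < γ s)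
    (hγ0 : γ 0 = 1) (hγ'0 : deriv γ 0 = 1)
    (hγmono : MonotoneOn γ (Set.Ici 0))
    (hγ'' : ∀ s : ℝ, 0 ≤ s → deriv (deriv γ) s < 0)
    (t : ℝ) (ht : 0 < t)
    (h F y y' : ℝ → ℝ)
    (hcont : ContinuousOn h (Set.Icc 0 t)) (hFcont : ContinuousOn F (Set.Icc 0 t))
    (hbound : ∀ s ∈ Set.Icc 0 t, |h s| ≤ -(deriv (deriv γ) s) / γ s)
    (hy : ∀ s ∈ Set.Icc 0 t, HasDerivAt y (y' s) s)
    (hy' : ∀ s ∈ Set.Icc 0 t, HasDerivAt y' (h s * y s + F s) s)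
    (hinit : y 0 = y' 0) (hend : y t = 0) :
    (∀ s ∈ Set.Icc 0 t, |y s| / γ s ≤ ∫ τ in (0 : ℝ)..t, |F τ| * ((t - τ) / γ t)) ∧
    (∀ s ∈ Set.Ico 0 t, |y s| / (t - s) ≤ ∫ τ in (0 : ℝ)..t, |F τ| * (γ τ / γ t)) := by
  have hT : (0:ℝ) ≤ t := ht.le
  have hγcont : Continuous γ := (hγC2.differentiable (by norm_num)).continuous
  have hγt : 0 < γ t := hγpos t hT
  -- |y s| ≤ γ s * V s
  have hVneg : odeV γ (fun s => -F s) t = odeV γ F t := by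
    unfold odeV odeG
    simp
  have habs : ∀ s ∈ Icc 0 t, |y s| ≤ γ s * odeV γ F t s := by
    intro s hs
    have h1 := one_sided γ hγC2 hγpos hγ0 hγ'0 t ht h F y y' hFcont hbound hy hy' hinit hend s hs
    have h2 := one_sided γ hγC2 hγpos hγ0 hγ'0 t ht h (fun s => -F s) (fun s => -y s)
      (fun s => -y' s) hFcont.neg hbound (fun s hs => (hy s hs).neg)
      (fun s hs => (hy' s hs).neg.congr_deriv (by ring))
      (by simp [hinit]) (by simp [hend]) s hs
    rw [hVneg] at h2
    exact abs_le.mpr ⟨by linarith, h1⟩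
  have hQcont : Continuous (odeQ γ t) := continuous_iff_continuousAt.2
    fun x => (hasDerivAt_Q hγcont hγpos hT x).continuousAt
  -- V s ≤ V 0
  have hVmono : ∀ s ∈ Icc 0 t, odeV γ F t s ≤ odeV γ F t 0 := by
    intro s hs
    have hint : Continuous fun σ => odeG γ F t σ * ((γ (odeCl t σ)) ^ 2)⁻¹ :=
      (cont_G hγcont hFcont hT).mul (cont_q hγcont hγpos hT)
    have hi1 : IntervalIntegrable (fun σ => odeG γ F t σ * ((γ (odeCl t σ)) ^ 2)⁻¹) volume 0 s :=
      hint.intervalIntegrable 0 s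
    have hi2 : IntervalIntegrable (fun σ => odeG γ F t σ * ((γ (odeCl t σ)) ^ 2)⁻¹) volume s t :=
      hint.intervalIntegrable s t
    have hadd := intervalIntegral.integral_add_adjacent_intervals hi1 hi2
    have hnn : 0 ≤ ∫ σ in (0:ℝ)..s, odeG γ F t σ * ((γ (odeCl t σ)) ^ 2)⁻¹ :=
      intervalIntegral.integral_nonneg hs.1 fun σ hσ =>
        mul_nonneg (G_nonneg hγpos hT hσ.1) (by positivity)
    show odeV γ F t s ≤ odeV γ F t 0
    unfold odeV
    rw [← hadd]; linarith
  -- V 0 ≤ ∫ |F| (t-τ)/γ t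
  have hV0 : odeV γ F t 0 ≤ ∫ τ in (0:ℝ)..t, |F τ| * ((t - τ) / γ t) := by
    have h2 : ∀ x ∈ uIcc (0:ℝ) t, HasDerivAt (fun σ => -(odeQ γ t σ))
        (((γ (odeCl t x)) ^ 2)⁻¹) x := fun x _ => by
      exact (hasDerivAt_Q hγcont hγpos hT x).neg.congr_deriv (neg_neg _)
    have hparts := intervalIntegral.integral_mul_deriv_eq_deriv_mul
      (u := odeG γ F t) (u' := fun σ => γ (odeCl t σ) * |F (odeCl t σ)|)
      (v := fun σ => -(odeQ γ t σ)) (v' := fun σ => ((γ (odeCl t σ)) ^ 2)⁻¹)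
      (fun x _ => hasDerivAt_G hγcont hFcont hT x) h2
      ((cont_g hγcont hFcont hT).intervalIntegrable 0 t)
      ((cont_q hγcont hγpos hT).intervalIntegrable 0 t)
    have hQt : odeQ γ t t = 0 := intervalIntegral.integral_same
    have hG0 : odeG γ F t 0 = 0 := intervalIntegral.integral_same
    have hV0eq : odeV γ F t 0 = ∫ τ in (0:ℝ)..t,
        (γ (odeCl t τ) * |F (odeCl t τ)|) * odeQ γ t τ := by
      show (∫ σ in (0:ℝ)..t, odeG γ F t σ * ((γ (odeCl t σ)) ^ 2)⁻¹) = _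
      rw [hparts]
      simp [hQt, hG0, mul_neg, intervalIntegral.integral_neg]
    rw [hV0eq]
    apply intervalIntegral.integral_mono_on hT
    · exact ((cont_g hγcont hFcont hT).mul hQcont).intervalIntegrable 0 t
    · apply ContinuousOn.intervalIntegrable
      rw [uIcc_of_le hT]
      exact hFcont.abs.mul ((continuous_const.sub continuous_id).continuousOn.div_const _)
    · intro τ hτ
      rw [odeCl_eq hτ]
      have hk := key_ineq hγC2 hγpos hγ'' hT hτ
      have hQnn : 0 ≤ odeQ γ t τ := intervalIntegral.integral_nonneg hτ.2
        fun r _ => by positivity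
      calc γ τ * |F τ| * odeQ γ t τ = |F τ| * (γ τ * odeQ γ t τ) := by ring
        _ ≤ |F τ| * ((t - τ) / γ t) := mul_le_mul_of_nonneg_left hk (abs_nonneg _)
  constructor
  · intro s hs
    have hX : 0 < γ s := hγpos s hs.1
    rw [div_le_iff₀ hX]
    calc |y s| ≤ γ s * odeV γ F t s := habs s hs
      _ ≤ γ s * odeV γ F t 0 := mul_le_mul_of_nonneg_left (hVmono s hs) hX.le
      _ ≤ γ s * ∫ τ in (0:ℝ)..t, |F τ| * ((t - τ) / γ t) :=
          mul_le_mul_of_nonneg_left hV0 hX.le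
      _ = (∫ τ in (0:ℝ)..t, |F τ| * ((t - τ) / γ t)) * γ s := by ring
  · intro s hs
    have hsI : s ∈ Icc 0 t := ⟨hs.1, hs.2.le⟩
    have hX : 0 < γ s := hγpos s hs.1
    have hts : 0 < t - s := sub_pos.mpr hs.2
    -- V s ≤ G t * Q s
    have hVs : odeV γ F t s ≤ odeG γ F t t * odeQ γ t s := by
      have : odeV γ F t s ≤ ∫ σ in s..t, odeG γ F t t * ((γ (odeCl t σ)) ^ 2)⁻¹ := by
        apply intervalIntegral.integral_mono_on hs.2.le
        · exact ((cont_G hγcont hFcont hT).mul (cont_q hγcont hγpos hT)).intervalIntegrable s t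
        · exact (continuous_const.mul (cont_q hγcont hγpos hT)).intervalIntegrable s t
        · intro σ hσ
          exact mul_le_mul_of_nonneg_right (G_mono hγcont hFcont hT hσ.2 hγpos)
            (by positivity)
      rwa [intervalIntegral.integral_const_mul] at this
    have hGt : 0 ≤ odeG γ F t t := G_nonneg hγpos hT hT
    have hyb : |y s| ≤ odeG γ F t t * ((t - s) / γ t) :=
      calc |y s| ≤ γ s * odeV γ F t s := habs s hsI
        _ ≤ γ s * (odeG γ F t t * odeQ γ t s) := mul_le_mul_of_nonneg_left hVs hX.le
        _ = odeG γ F t t * (γ s * odeQ γ t s) := by ring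
        _ ≤ odeG γ F t t * ((t - s) / γ t) :=
            mul_le_mul_of_nonneg_left (key_ineq hγC2 hγpos hγ'' hT hsI) hGt
    have hB : (∫ τ in (0:ℝ)..t, |F τ| * (γ τ / γ t)) = odeG γ F t t / γ t := by
      show _ = (∫ τ in (0:ℝ)..t, γ (odeCl t τ) * |F (odeCl t τ)|) / γ t
      rw [← intervalIntegral.integral_div]
      apply intervalIntegral.integral_congr
      intro τ hτ
      rw [uIcc_of_le hT] at hτ
      show |F τ| * (γ τ / γ t) = γ (odeCl t τ) * |F (odeCl t τ)| / γ t
      rw [odeCl_eq hτ]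
      ring
    rw [div_le_iff₀ hts, hB]
    calc |y s| ≤ odeG γ F t t * ((t - s) / γ t) := hyb
      _ = odeG γ F t t / γ t * (t - s) := by ring
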